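/- Assume h-exchangeability of the densities. Then for every symmetric, weakly monotone measurable decision rule D : [0,1]^K → {0,1}^K and every 1 ≤ L ≤ K, the false discovery rate under configuration h_L satisfies FDR_{h_L}(D) = L!(K−L)! · ∫_Q Σ_{k=1}^K D_k(u) · ( Σ_{S ⊆ {1,…,K}, |S| = L} f_S(u) · r_{k,S} ) du, where f_S denotes the density under the configuration whose set of false nulls is exactly S, r_{k,S} = |{1,…,k} ∩ S^c|/k − |{1,…,k−1} ∩ S^c|/(k−1) with the convention 0/0 = 0, S^c = {1,…,K} \ S is the set of true nulls, and Q = {u ∈ [0,1]^K : 0 ≤ u_1 ≤ … ≤ u_K ≤ 1}. -/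

import Mathlib

open MeasureTheory Finset

noncomputable section

/-- The unit cube `[0,1]^K`. -/
def unitCube (K : ℕ) : Set (Fin K → ℝ) := Set.Icc 0 1

/-- The "lower corner" set `Q = {u ∈ [0,1]^K : u 1 ≤ u 2 ≤ … ≤ u K}`. -/
def QSet (K : ℕ) : Set (Fin K → ℝ) :=
  {u | Monotone u ∧ ∀ i, 0 ≤ u i ∧ u i ≤ 1}

/-- Symmetry of a decision rule: `σ(D(u)) = D(σ(u))` for every permutation `σ`. -/
def IsSymmRule (K : ℕ) (D : (Fin K → ℝ) → Fin K → ℝ) : Prop :=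
  ∀ (σ : Equiv.Perm (Fin K)) (u : Fin K → ℝ), D (u ∘ σ) = (D u) ∘ σ

/-- Weak monotonicity: `u i ≤ u j` implies `D i (u) ≥ D j (u)`. -/
def IsWeaklyMonotone (K : ℕ) (D : (Fin K → ℝ) → Fin K → ℝ) : Prop :=
  ∀ (u : Fin K → ℝ) (i j : Fin K), u i ≤ u j → D u j ≤ D u i

/-- h-exchangeability: `f_h(u) = f_{σ(h)}(σ(u))`. -/
def Exchangeable (K : ℕ) (f : (Fin K → Bool) → (Fin K → ℝ) → ℝ) : Prop :=
  ∀ (σ : Equiv.Perm (Fin K)) (h : Fin K → Bool) (u : Fin K → ℝ),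
    f h u = f (h ∘ σ) (u ∘ σ)

/-- False discovery rate of `D` under configuration `h`. -/
def FDRm (K : ℕ) (f : (Fin K → Bool) → (Fin K → ℝ) → ℝ) (h : Fin K → Bool)
    (D : (Fin K → ℝ) → Fin K → ℝ) : ℝ :=
  ∫ u in unitCube K,
    ((∑ k, if h k then 0 else D u k) / max (∑ k, D u k) 1) * f h u

/-- `r_{k,S}`: the change in false discovery proportion between rejecting the `k` and the
`k−1` smallest p-values, when the set of false nulls is `S` (with the convention
`0/0 = 0`, automatic in Lean since division by zero is zero). With 1-based index `k`,
`{1,…,k}` is `Finset.Iic k` and `{1,…,k−1}` is `Finset.Iio k` for `k : Fin K`. -/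
def rCoef (K : ℕ) (k : Fin K) (S : Finset (Fin K)) : ℝ :=
  ((Finset.Iic k ∩ Sᶜ).card : ℝ) / ((k : ℕ) + 1) -
    ((Finset.Iio k ∩ Sᶜ).card : ℝ) / (k : ℕ)

/-! ### Auxiliary material -/

section Aux

/-- Counting function: number of indices `< m` that are not in `S`. -/
def nFalse {K : ℕ} (S : Finset (Fin K)) (m : ℕ) : ℕ :=
  ((Finset.univ.filter fun k : Fin K => (k : ℕ) < m) ∩ Sᶜ).card

theorem fdp_eq (K : ℕ) (v : Fin K → ℝ) (h01 : ∀ k, v k = 0 ∨ v k = 1)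
    (hanti : ∀ i j : Fin K, i ≤ j → v j ≤ v i) (S : Finset (Fin K)) :
    (∑ k, (if k ∈ S then 0 else v k)) / max (∑ k, v k) 1 = ∑ k, v k * rCoef K k S := by
  classical
  set A : Finset (Fin K) := Finset.univ.filter (fun k => v k = 1) with hA
  set R : ℕ := A.card with hR
  have hdown : ∀ i j : Fin K, i ≤ j → j ∈ A → i ∈ A := by
    intro i j hij hj
    simp only [hA, mem_filter, mem_univ, true_and] at hj ⊢
    rcases h01 i with h | h
    · have := hanti i j hij
      rw [hj, h] at this; linarith
    · exact h
  have hmem : ∀ k : Fin K, v k = 1 ↔ (k : ℕ) < R := by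
    intro k
    constructor
    · intro hk
      have hsub : Finset.Iic k ⊆ A := fun j hj =>
        hdown j k (Finset.mem_Iic.1 hj) (by simp [hA, hk])
      have := Finset.card_le_card hsub
      rw [Fin.card_Iic] at this
      omega
    · intro hk
      by_contra hvk
      have hsub : A ⊆ Finset.Iio k := by
        intro j hj
        rw [Finset.mem_Iio]
        by_contra hjk
        exact hvk ((Finset.mem_filter.1 (hdown k j (le_of_not_gt hjk) hj)).2)
      have := Finset.card_le_card hsub
      rw [Fin.card_Iio] at this
      omega
  have hv : ∀ k : Fin K, v k = if (k : ℕ) < R then 1 else 0 := by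
    intro k
    rcases h01 k with h | h
    · rw [h]; rw [eq_comm, if_neg]; intro hlt; rw [(hmem k).2 hlt] at h; norm_num at h
    · rw [h, if_pos ((hmem k).1 h)]
  have hIic : ∀ k : Fin K, (Finset.Iic k ∩ Sᶜ).card = nFalse S ((k : ℕ) + 1) := by
    intro k
    simp only [nFalse]
    congr 1
    ext j
    simp only [Finset.mem_inter, Finset.mem_filter, Finset.mem_Iic, Finset.mem_univ, true_and,
      Fin.le_def, Nat.lt_succ_iff]
  have hIio : ∀ k : Fin K, (Finset.Iio k ∩ Sᶜ).card = nFalse S (k : ℕ) := by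
    intro k
    simp only [nFalse]
    congr 1
    ext j
    simp only [Finset.mem_inter, Finset.mem_filter, Finset.mem_Iio, Finset.mem_univ, true_and,
      Fin.lt_def]
  have hr : ∀ k : Fin K, rCoef K k S
      = (nFalse S ((k : ℕ) + 1) : ℝ) / ((k : ℕ) + 1) - (nFalse S (k : ℕ) : ℝ) / (k : ℕ) := by
    intro k; rw [rCoef, hIic, hIio]
  have hRK : R ≤ K := by
    simpa using Finset.card_le_card (Finset.subset_univ A)
  have hfilter : (Finset.range K).filter (· < R) = Finset.range R := by
    ext i; simp only [Finset.mem_filter, Finset.mem_range]; omega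
  -- RHS sum
  have hRHS : ∑ k, v k * rCoef K k S = (nFalse S R : ℝ) / R := by
    have e1 : ∑ k, v k * rCoef K k S
        = ∑ k : Fin K, (fun i : ℕ => if i < R then
            ((nFalse S (i + 1) : ℝ) / (i + 1) - (nFalse S i : ℝ) / i) else 0) (k : ℕ) := by
      refine Finset.sum_congr rfl fun k _ => ?_
      rw [hv k, hr k]
      by_cases hk : (k : ℕ) < R <;> simp [hk]
    have e1' : ∑ k : Fin K, (fun i : ℕ => if i < R then
            ((nFalse S (i + 1) : ℝ) / (i + 1) - (nFalse S i : ℝ) / i) else 0) (k : ℕ)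
        = ∑ i ∈ Finset.range K, (fun i : ℕ => if i < R then
            ((nFalse S (i + 1) : ℝ) / (i + 1) - (nFalse S i : ℝ) / i) else 0) i :=
      Fin.sum_univ_eq_sum_range (fun i : ℕ => if i < R then
            ((nFalse S (i + 1) : ℝ) / (i + 1) - (nFalse S i : ℝ) / i) else 0) K
    rw [e1, e1']
    simp only []
    rw [← Finset.sum_filter, hfilter]
    have e2 : ∑ i ∈ Finset.range R,
        ((nFalse S (i + 1) : ℝ) / (i + 1) - (nFalse S i : ℝ) / i)
        = ∑ i ∈ Finset.range R,
          ((fun m : ℕ => (nFalse S m : ℝ) / m) (i + 1) - (fun m : ℕ => (nFalse S m : ℝ) / m) i) := by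
      refine Finset.sum_congr rfl fun i _ => ?_
      push_cast
      ring_nf
    rw [e2, Finset.sum_range_sub (fun m : ℕ => (nFalse S m : ℝ) / m)]
    simp
  -- total rejections
  have hsumv : ∑ k, v k = (R : ℝ) := by
    have : ∑ k, v k = ∑ k : Fin K, if v k = 1 then (1:ℝ) else 0 := by
      refine Finset.sum_congr rfl fun k _ => ?_
      rcases h01 k with h | h <;> simp [h]
    rw [this, Finset.sum_boole, hR, hA]
  -- numerator
  have hnum : (∑ k, (if k ∈ S then 0 else v k)) = (nFalse S R : ℝ) := by
    have : ∑ k, (if k ∈ S then 0 else v k)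
        = ∑ k : Fin K, if (k : ℕ) < R ∧ k ∉ S then (1:ℝ) else 0 := by
      refine Finset.sum_congr rfl fun k _ => ?_
      rw [hv k]
      by_cases h1 : k ∈ S <;> by_cases h2 : (k : ℕ) < R <;> simp [h1, h2]
    rw [this, Finset.sum_boole]
    congr 1
    simp only [nFalse]
    congr 1
    ext j
    simp [and_comm]
  rw [hnum, hsumv, hRHS]
  rcases Nat.eq_zero_or_pos R with h0 | hpos
  · rw [h0]
    have : nFalse S 0 = 0 := by simp [nFalse]
    rw [this]
    simp
  · have : max (R : ℝ) 1 = R := by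
      rw [max_eq_left]
      exact_mod_cast hpos
    rw [this]

/-- Permutations mapping `T` onto `S` are in bijection with pairs of bijections. -/
def permFiberEquiv {K : ℕ} (T S : Finset (Fin K)) :
    {σ : Equiv.Perm (Fin K) // ∀ x, x ∈ T ↔ σ x ∈ S} ≃
      (({x // x ∈ T} ≃ {x // x ∈ S}) × ({x // x ∉ T} ≃ {x // x ∉ S})) where
  toFun σ := (σ.1.subtypeEquiv fun a => σ.2 a, σ.1.subtypeEquiv fun a => not_congr (σ.2 a))
  invFun e := ⟨((Equiv.sumCompl (· ∈ T)).symm.trans ((e.1.sumCongr e.2).trans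
      (Equiv.sumCompl (· ∈ S)))), by
    intro x
    by_cases hx : x ∈ T
    · simp [Equiv.sumCompl_symm_apply_of_pos hx, hx, (e.1 ⟨x, hx⟩).2]
    · simp [Equiv.sumCompl_symm_apply_of_neg hx, hx, (e.2 ⟨x, hx⟩).2]⟩
  left_inv := by
    rintro ⟨σ, hσ⟩
    ext x
    by_cases hx : x ∈ T
    · simp [Equiv.sumCompl_symm_apply_of_pos hx, hx]
    · simp [Equiv.sumCompl_symm_apply_of_neg hx, hx]
  right_inv := by
    rintro ⟨e₁, e₂⟩
    have A : ∀ (x : Fin K) (hx : x ∈ T),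
        ((Equiv.sumCompl (· ∈ T)).symm.trans ((e₁.sumCongr e₂).trans
          (Equiv.sumCompl (· ∈ S)))) x = (e₁ ⟨x, hx⟩ : Fin K) := by
      intro x hx
      simp [Equiv.sumCompl_symm_apply_of_pos hx]
    have B : ∀ (x : Fin K) (hx : x ∉ T),
        ((Equiv.sumCompl (· ∈ T)).symm.trans ((e₁.sumCongr e₂).trans
          (Equiv.sumCompl (· ∈ S)))) x = (e₂ ⟨x, hx⟩ : Fin K) := by
      intro x hx
      simp [Equiv.sumCompl_symm_apply_of_neg hx]
    refine Prod.ext ?_ ?_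
    · ext ⟨x, hx⟩
      simp [A x hx]
    · ext ⟨x, hx⟩
      simp [B x hx]

theorem card_perm_fiber {K L : ℕ} (T S : Finset (Fin K)) (hT : T.card = L) (hS : S.card = L) :
    (Finset.univ.filter fun σ : Equiv.Perm (Fin K) => ∀ x, x ∈ T ↔ σ x ∈ S).card
      = L.factorial * (K - L).factorial := by
  classical
  have h1 : (Finset.univ.filter fun σ : Equiv.Perm (Fin K) => ∀ x, x ∈ T ↔ σ x ∈ S).card
      = Fintype.card {σ : Equiv.Perm (Fin K) // ∀ x, x ∈ T ↔ σ x ∈ S} :=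
    (Fintype.card_subtype _).symm
  rw [h1, Fintype.card_congr (permFiberEquiv T S), Fintype.card_prod]
  have hTS : Fintype.card {x // x ∈ T} = Fintype.card {x // x ∈ S} := by
    simp [Fintype.card_coe, hT, hS]
  have c1 : Fintype.card ({x // x ∈ T} ≃ {x // x ∈ S}) = L.factorial := by
    rw [Fintype.card_equiv (Fintype.equivOfCardEq hTS)]
    simp [Fintype.card_coe, hT]
  have hTS' : Fintype.card {x // x ∉ T} = Fintype.card {x // x ∉ S} := by
    simp only [Fintype.card_subtype_compl, Fintype.card_coe, hT, hS]
  have c2 : Fintype.card ({x // x ∉ T} ≃ {x // x ∉ S}) = (K - L).factorial := by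
    rw [Fintype.card_equiv (Fintype.equivOfCardEq hTS')]
    simp [Fintype.card_subtype_compl, Fintype.card_coe, hT]
  rw [c1, c2]


theorem measurePreserving_compPerm (K : ℕ) (σ : Equiv.Perm (Fin K)) :
    MeasurePreserving (fun u : Fin K → ℝ => u ∘ σ) volume volume := by
  have := volume_measurePreserving_piCongrLeft (fun _ : Fin K => ℝ) σ.symm
  convert this using 1
  ext u k
  simp [MeasurableEquiv.piCongrLeft, Equiv.piCongrLeft]

theorem volume_noninjective (K : ℕ) :
    volume {u : Fin K → ℝ | ¬ Function.Injective u} = 0 := by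

  have : {u : Fin K → ℝ | ¬ Function.Injective u} ⊆
      ⋃ (i : Fin K) (j : Fin K) (_ : i ≠ j), {u : Fin K → ℝ | u i = u j} := by
    intro u hu
    simp only [Function.Injective, not_forall] at hu
    obtain ⟨i, j, hij, hne⟩ := hu
    exact Set.mem_iUnion.2 ⟨i, Set.mem_iUnion.2 ⟨j, Set.mem_iUnion.2 ⟨hne, hij⟩⟩⟩
  refine measure_mono_null this ?_
  refine measure_iUnion_null fun i => measure_iUnion_null fun j => measure_iUnion_null fun hij => ?_
  set φ : (Fin K → ℝ) →ₗ[ℝ] ℝ := (LinearMap.proj (R := ℝ) (φ := fun _ : Fin K => ℝ) i) - (LinearMap.proj (R := ℝ) (φ := fun _ : Fin K => ℝ) j) with hφ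
  have hker : {u : Fin K → ℝ | u i = u j} = (LinearMap.ker φ : Set (Fin K → ℝ)) := by
    ext u; simp [hφ, LinearMap.mem_ker, sub_eq_zero]
  rw [hker]
  refine Measure.addHaar_submodule _ _ ?_
  intro htop
  have hmem : Pi.single i (1:ℝ) ∈ LinearMap.ker φ := htop ▸ Submodule.mem_top
  have : φ (Pi.single i (1:ℝ)) = 0 := hmem
  simp [hφ, Pi.single_apply, Ne.symm hij] at this

end Aux

/-- Under h-exchangeability, for every symmetric, weakly monotone,
0/1-valued measurable decision rule `D` and every `1 ≤ L ≤ K`,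
`FDR_{h_L}(D) = L!(K−L)! ∫_Q Σ_k D_k(u) (Σ_{|S|=L} f_S(u) r_{k,S}) du`. -/
theorem FDR_as_integral_over_Q
    (K L : ℕ) (hL1 : 1 ≤ L) (hL2 : L ≤ K)
    (f : (Fin K → Bool) → (Fin K → ℝ) → ℝ)
    (hfMeas : ∀ h, Measurable (f h)) (hfNonneg : ∀ h u, 0 ≤ f h u)
    (hfInt : ∀ h, IntegrableOn (f h) (unitCube K))
    (hExch : Exchangeable K f)
    (D : (Fin K → ℝ) → Fin K → ℝ)
    (hDMeas : Measurable D) (hD01 : ∀ u k, D u k = 0 ∨ D u k = 1)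
    (hDSymm : IsSymmRule K D) (hDMono : IsWeaklyMonotone K D) :
    FDRm K f (fun k => decide ((k : ℕ) < L)) D =
      ((L.factorial : ℝ) * (K - L).factorial) *
        ∫ u in QSet K,
          ∑ k : Fin K, D u k *
            ∑ S ∈ Finset.univ.powersetCard L,
              f (fun k' => decide (k' ∈ S)) u * rCoef K k S := by
  classical
  set hL : Fin K → Bool := fun k => decide ((k : ℕ) < L) with hhL
  -- the integrand under a general configuration
  set g : (Fin K → Bool) → (Fin K → ℝ) → ℝ := fun h u =>
    ((∑ k, if h k then 0 else D u k) / max (∑ k, D u k) 1) * f h u with hg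
  -- the integrand parametrized by a finset of false nulls
  set cfg : Finset (Fin K) → (Fin K → Bool) := fun S => fun k => decide (k ∈ S) with hcfg
  -- measurability of D components
  have hDk : ∀ k : Fin K, Measurable (fun u => D u k) := fun k =>
    (measurable_pi_apply k).comp hDMeas
  have hgMeas : ∀ h, Measurable (g h) := by
    intro h
    apply Measurable.mul
    · apply Measurable.div
      · exact Finset.measurable_sum _ fun k _ => by
          by_cases hk : h k <;> simp [hk, hDk k, measurable_const]
      · exact (Finset.measurable_sum _ fun k _ => hDk k).max measurable_const
    · exact hfMeas h
  -- bounds on the FDP ratio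
  have hratio : ∀ (h : Fin K → Bool) (u : Fin K → ℝ),
      0 ≤ (∑ k, if h k then 0 else D u k) / max (∑ k, D u k) 1 ∧
      (∑ k, if h k then 0 else D u k) / max (∑ k, D u k) 1 ≤ K := by
    intro h u
    have hnum0 : 0 ≤ ∑ k, if h k then 0 else D u k := by
      apply Finset.sum_nonneg
      intro k _
      by_cases hk : h k <;> simp [hk]
      · rcases hD01 u k with h' | h' <;> simp [h']
    have hnumK : (∑ k, if h k then 0 else D u k) ≤ K := by
      calc (∑ k, if h k then 0 else D u k) ≤ ∑ _k : Fin K, (1:ℝ) := by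
            apply Finset.sum_le_sum
            intro k _
            by_cases hk : h k
            · simp [hk]
            · rcases hD01 u k with h' | h' <;> simp [hk, h']
        _ = K := by simp
    have hden : (1:ℝ) ≤ max (∑ k, D u k) 1 := le_max_right _ _
    constructor
    · exact div_nonneg hnum0 (le_trans zero_le_one hden)
    · calc (∑ k, if h k then 0 else D u k) / max (∑ k, D u k) 1
          ≤ (∑ k, if h k then 0 else D u k) := div_le_self hnum0 hden
        _ ≤ K := hnumK
  -- integrability of `g h` on any measurable subset of the cube
  have hgInt : ∀ (h : Fin K → Bool) (s : Set (Fin K → ℝ)), s ⊆ unitCube K →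
      IntegrableOn (g h) s := by
    intro h s hs
    refine IntegrableOn.mono_set ?_ hs
    refine Integrable.mono' (((hfInt h).const_mul (K : ℝ))) ((hgMeas h).aestronglyMeasurable) ?_
    filter_upwards with u
    rw [hg]
    simp only [Real.norm_eq_abs]
    rw [abs_of_nonneg (mul_nonneg (hratio h u).1 (hfNonneg h u))]
    exact mul_le_mul_of_nonneg_right (hratio h u).2 (hfNonneg h u)
  -- the sorted regions
  set A : Equiv.Perm (Fin K) → Set (Fin K → ℝ) := fun σ => {u | StrictMono (u ∘ σ)} with hA
  have hAmeas : ∀ σ, MeasurableSet (A σ) := by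
    intro σ
    have : A σ = ⋂ (i : Fin K) (j : Fin K) (_ : i < j), {u : Fin K → ℝ | u (σ i) < u (σ j)} := by
      ext u
      simp only [hA, Set.mem_iInter, Set.mem_setOf_eq]
      exact ⟨fun h i j hij => h hij, fun h a b hab => h a b hab⟩
    rw [this]
    exact MeasurableSet.iInter fun i => MeasurableSet.iInter fun j =>
      MeasurableSet.iInter fun _ =>
        measurableSet_lt (measurable_pi_apply _) (measurable_pi_apply _)
  have hAinj : ∀ σ u, u ∈ A σ → Function.Injective u := by
    intro σ u hu
    have h1 : Function.Injective (u ∘ σ) := (hu : StrictMono (u ∘ σ)).injective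
    have h2 : u = (u ∘ σ) ∘ σ.symm := by
      funext x; simp
    rw [h2]
    exact h1.comp σ.symm.injective
  have hdisjA : Pairwise (Function.onFun Disjoint A) := by
    intro σ τ hne
    refine Set.disjoint_left.2 fun u huσ huτ => hne ?_
    have huinj := hAinj σ u huσ
    have hcomp : u ∘ σ = u ∘ τ :=
      Tuple.unique_monotone (huσ : StrictMono (u ∘ σ)).monotone
        (huτ : StrictMono (u ∘ τ)).monotone
    exact Equiv.ext fun x => huinj (congrFun hcomp x)
  have hcover : unitCube K \ (⋃ σ, A σ) ⊆ {u | ¬ Function.Injective u} := by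
    intro u hu
    simp only [Set.mem_setOf_eq]
    intro hinj
    apply hu.2
    refine Set.mem_iUnion.2 ⟨Tuple.sort u, ?_⟩
    exact (Tuple.monotone_sort u).strictMono_of_injective
      (hinj.comp (Tuple.sort u).injective)
  have hcubeMeas : MeasurableSet (unitCube K) := measurableSet_Icc
  have hcube : ∀ u : Fin K → ℝ, u ∈ unitCube K ↔ ∀ i, 0 ≤ u i ∧ u i ≤ 1 := by
    intro u
    simp only [unitCube, Set.mem_Icc, Pi.le_def]
    constructor
    · exact fun h i => ⟨h.1 i, h.2 i⟩
    · exact fun h => ⟨fun i => (h i).1, fun i => (h i).2⟩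
  -- decomposition of the integral over the cube
  have hsets : unitCube K =ᵐ[volume] ⋃ σ, (unitCube K ∩ A σ) := by
    rw [MeasureTheory.ae_eq_set]
    constructor
    · refine measure_mono_null ?_ (volume_noninjective K)
      intro u hu
      refine hcover ⟨hu.1, fun hmem => hu.2 ?_⟩
      obtain ⟨s, ⟨σ, rfl⟩, hs⟩ := hmem
      exact Set.mem_iUnion.2 ⟨σ, ⟨hu.1, hs⟩⟩
    · have : (⋃ σ, (unitCube K ∩ A σ)) \ unitCube K = ∅ := by
        refine Set.diff_eq_empty.2 ?_
        exact Set.iUnion_subset fun σ => Set.inter_subset_left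
      rw [this, measure_empty]
  have hsplit : ∫ u in unitCube K, g hL u
      = ∑ σ : Equiv.Perm (Fin K), ∫ u in unitCube K ∩ A σ, g hL u := by
    rw [setIntegral_congr_set hsets,
      integral_iUnion (fun σ => hcubeMeas.inter (hAmeas σ))
        (fun σ τ hne => (hdisjA hne).mono Set.inter_subset_right
          Set.inter_subset_right)
        (hgInt hL _ (Set.iUnion_subset fun σ => Set.inter_subset_left)),
      tsum_fintype]
  -- `Q` versus the sorted part of the cube
  have hQsub : QSet K ⊆ unitCube K := fun u hu => (hcube u).2 hu.2
  have hQae : ((unitCube K ∩ A (1 : Equiv.Perm (Fin K))) : Set (Fin K → ℝ)) =ᵐ[volume] (QSet K : Set (Fin K → ℝ)) := by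
    rw [MeasureTheory.ae_eq_set]
    constructor
    · have : (unitCube K ∩ A (1 : Equiv.Perm (Fin K))) \ QSet K = ∅ := by
        refine Set.diff_eq_empty.2 fun u hu => ?_
        have hsm : StrictMono (u ∘ (1 : Equiv.Perm (Fin K))) := hu.2
        have hsm' : StrictMono u := by
          have : u ∘ (1 : Equiv.Perm (Fin K)) = u := rfl
          rwa [this] at hsm
        exact ⟨hsm'.monotone, fun i => (hcube u).1 hu.1 i⟩
      rw [this, measure_empty]
    · refine measure_mono_null ?_ (volume_noninjective K)
      intro u hu
      simp only [Set.mem_setOf_eq]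
      intro hinj
      refine hu.2 ⟨hQsub hu.1, ?_⟩
      show StrictMono (u ∘ (1 : Equiv.Perm (Fin K)))
      have : u ∘ (1 : Equiv.Perm (Fin K)) = u := rfl
      rw [this]
      exact (hu.1.1 : Monotone u).strictMono_of_injective hinj
  -- change of variables
  have hchange : ∀ σ : Equiv.Perm (Fin K),
      ∫ u in unitCube K ∩ A σ, g hL u = ∫ v in QSet K, g hL (v ∘ σ.symm) := by
    intro σ
    set E : (Fin K → ℝ) ≃ᵐ (Fin K → ℝ) :=
      MeasurableEquiv.piCongrLeft (fun _ : Fin K => ℝ) σ.symm with hE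
    have hEfun : ∀ u : Fin K → ℝ, E u = u ∘ σ := by
      intro u
      funext k
      simp [hE, MeasurableEquiv.piCongrLeft, Equiv.piCongrLeft]
    have hmp : MeasurePreserving (⇑E) volume volume :=
      volume_measurePreserving_piCongrLeft (fun _ : Fin K => ℝ) σ.symm
    have hpre : unitCube K ∩ A σ = ⇑E ⁻¹' (unitCube K ∩ A (1 : Equiv.Perm (Fin K))) := by
      ext u
      simp only [Set.mem_preimage, Set.mem_inter_iff, hEfun u]
      constructor
      · rintro ⟨h1, h2⟩
        refine ⟨?_, ?_⟩
        · rw [hcube]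
          intro i
          exact (hcube u).1 h1 (σ i)
        · show StrictMono ((u ∘ σ) ∘ (1 : Equiv.Perm (Fin K)))
          exact h2
      · rintro ⟨h1, h2⟩
        refine ⟨?_, h2⟩
        rw [hcube]
        intro i
        have := (hcube (u ∘ σ)).1 h1 (σ.symm i)
        simpa using this
    have key : ∫ u in ⇑E ⁻¹' (unitCube K ∩ A (1 : Equiv.Perm (Fin K))), (fun v => g hL (v ∘ σ.symm)) (E u)
        = ∫ v in unitCube K ∩ A (1 : Equiv.Perm (Fin K)), g hL (v ∘ σ.symm) :=
      hmp.setIntegral_preimage_emb E.measurableEmbedding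
        (fun v => g hL (v ∘ ⇑σ.symm)) (unitCube K ∩ A (1 : Equiv.Perm (Fin K)))
    have hfun : ∀ u : Fin K → ℝ, g hL u = (fun v => g hL (v ∘ σ.symm)) (E u) := by
      intro u
      simp only [hEfun u]
      congr 1
      funext x
      simp
    calc ∫ u in unitCube K ∩ A σ, g hL u
        = ∫ u in ⇑E ⁻¹' (unitCube K ∩ A (1 : Equiv.Perm (Fin K))), (fun v => g hL (v ∘ σ.symm)) (E u) := by
          rw [← hpre]
          exact integral_congr_ae (Filter.Eventually.of_forall fun u => hfun u)
      _ = ∫ v in unitCube K ∩ A (1 : Equiv.Perm (Fin K)), g hL (v ∘ σ.symm) := key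
      _ = ∫ v in QSet K, g hL (v ∘ σ.symm) := setIntegral_congr_set hQae
  -- the index-set map attached to a permutation
  set T : Finset (Fin K) := Finset.univ.filter (fun k : Fin K => (k : ℕ) < L) with hT
  have hTcard : T.card = L := by
    have h1 : T.card = ∑ k : Fin K, (fun i : ℕ => if i < L then 1 else 0) (k : ℕ) := by
      rw [hT, Finset.card_filter]
    rw [h1, Fin.sum_univ_eq_sum_range (fun i : ℕ => if i < L then 1 else 0) K,
      ← Finset.card_filter]
    have h2 : (Finset.range K).filter (fun i => i < L) = Finset.range L := by
      ext i
      simp only [Finset.mem_filter, Finset.mem_range]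
      omega
    rw [h2, Finset.card_range]
  set mS : Equiv.Perm (Fin K) → Finset (Fin K) :=
    fun σ => Finset.univ.filter (fun j => ((σ.symm j : Fin K) : ℕ) < L) with hmS
  have hmSimage : ∀ σ, mS σ = T.image σ := by
    intro σ
    ext j
    simp only [hmS, hT, Finset.mem_filter, Finset.mem_univ, true_and, Finset.mem_image]
    constructor
    · intro hj
      exact ⟨σ.symm j, hj, by simp⟩
    · rintro ⟨x, hx, rfl⟩
      simpa using hx
  have hmScard : ∀ σ, mS σ ∈ Finset.univ.powersetCard L := by
    intro σ
    rw [Finset.mem_powersetCard_univ, hmSimage, Finset.card_image_of_injective _ σ.injective,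
      hTcard]
  -- rewriting `g hL (· ∘ σ)` as `g (cfg (mS σ))`
  have hgσ : ∀ σ : Equiv.Perm (Fin K), (fun v => g hL (v ∘ σ)) = g (cfg (mS σ)) := by
    intro σ
    funext u
    have hD' : D (u ∘ σ) = D u ∘ σ := hDSymm σ u
    have hnum : (∑ k, if hL k then 0 else D (u ∘ σ) k)
        = ∑ j, if cfg (mS σ) j then 0 else D u j := by
      rw [← Equiv.sum_comp σ (fun j => if cfg (mS σ) j then 0 else D u j)]
      refine Finset.sum_congr rfl fun k _ => ?_
      have h1 : cfg (mS σ) (σ k) = hL k := by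
        simp only [hcfg, hmS, hhL]
        rw [decide_eq_decide]
        simp
      rw [h1, hD']
      rfl
    have hden : (∑ k, D (u ∘ σ) k) = ∑ k, D u k := by
      rw [hD']
      exact Equiv.sum_comp σ (D u)
    have hf' : f hL (u ∘ σ) = f (cfg (mS σ)) u := by
      have h2 : cfg (mS σ) = hL ∘ σ.symm := by
        funext j
        simp only [hcfg, hmS, hhL, Function.comp_apply]
        rw [decide_eq_decide]
        simp
      rw [h2]
      have h3 := hExch σ (hL ∘ ⇑σ.symm) u
      have h4 : (hL ∘ ⇑σ.symm) ∘ ⇑σ = hL := by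
        funext k
        simp
      rw [h3, h4]
    simp only [hg]
    rw [hnum, hden, hf']
  -- the fiber count
  have hfiber : ∀ S ∈ Finset.univ.powersetCard L,
      (Finset.univ.filter fun σ : Equiv.Perm (Fin K) => mS σ = S).card
        = L.factorial * (K - L).factorial := by
    intro S hS
    have hcond : ∀ σ : Equiv.Perm (Fin K), (mS σ = S) ↔ (∀ x, x ∈ T ↔ σ x ∈ S) := by
      intro σ
      constructor
      · intro h x
        rw [← h, hmSimage]
        constructor
        · intro hx
          exact Finset.mem_image.2 ⟨x, hx, rfl⟩
        · intro hx
          obtain ⟨y, hy, hyx⟩ := Finset.mem_image.1 hx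
          rwa [← σ.injective hyx]
      · intro h
        ext j
        rw [hmSimage]
        constructor
        · intro hj
          obtain ⟨y, hy, rfl⟩ := Finset.mem_image.1 hj
          exact (h y).1 hy
        · intro hj
          refine Finset.mem_image.2 ⟨σ.symm j, ?_, by simp⟩
          have := (h (σ.symm j)).2
          simp only [Equiv.apply_symm_apply] at this
          exact this hj
    rw [Finset.filter_congr (fun σ _ => hcond σ)]
    exact card_perm_fiber T S hTcard (Finset.mem_powersetCard_univ.1 hS)
  -- grouping the sum over permutations
  have hgroup : ∀ u : Fin K → ℝ, ∑ σ : Equiv.Perm (Fin K), g (cfg (mS σ)) u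
      = ∑ S ∈ Finset.univ.powersetCard L,
          ((L.factorial : ℝ) * (K - L).factorial) * g (cfg S) u := by
    intro u
    rw [← Finset.sum_fiberwise_of_maps_to (fun σ _ => hmScard σ)
      (fun σ => g (cfg (mS σ)) u)]
    refine Finset.sum_congr rfl fun S hS => ?_
    have : ∑ σ ∈ Finset.univ.filter (fun σ => mS σ = S), g (cfg (mS σ)) u
        = ∑ σ ∈ Finset.univ.filter (fun σ => mS σ = S), g (cfg S) u := by
      refine Finset.sum_congr rfl fun σ hσ => ?_
      rw [(Finset.mem_filter.1 hσ).2]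
    rw [this, Finset.sum_const, hfiber S hS, nsmul_eq_mul]
    push_cast
    ring
  -- measurability of Q
  have hQmeas : MeasurableSet (QSet K) := by
    have e0 : QSet K = {u : Fin K → ℝ | Monotone u} ∩ {u : Fin K → ℝ | ∀ i, 0 ≤ u i ∧ u i ≤ 1} := by
      ext u
      simp only [QSet, Set.mem_setOf_eq, Set.mem_inter_iff]
    have e1 : {u : Fin K → ℝ | Monotone u}
        = ⋂ p : Fin K × Fin K, {u : Fin K → ℝ | p.1 ≤ p.2 → u p.1 ≤ u p.2} := by
      ext u
      simp only [Set.mem_setOf_eq, Set.mem_iInter]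
      exact ⟨fun h p hp => h hp, fun h i j hij => h (i, j) hij⟩
    have e2 : {u : Fin K → ℝ | ∀ i, 0 ≤ u i ∧ u i ≤ 1}
        = ⋂ i : Fin K, ({u : Fin K → ℝ | 0 ≤ u i} ∩ {u : Fin K → ℝ | u i ≤ 1}) := by
      ext u
      simp only [Set.mem_setOf_eq, Set.mem_iInter, Set.mem_inter_iff]
    rw [e0, e1, e2]
    refine MeasurableSet.inter ?_ ?_
    · refine MeasurableSet.iInter fun p => ?_
      by_cases hp : p.1 ≤ p.2
      · have : {u : Fin K → ℝ | p.1 ≤ p.2 → u p.1 ≤ u p.2}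
            = {u : Fin K → ℝ | u p.1 ≤ u p.2} := by
          ext u
          simp [hp]
        rw [this]
        exact measurableSet_le (measurable_pi_apply _) (measurable_pi_apply _)
      · have : {u : Fin K → ℝ | p.1 ≤ p.2 → u p.1 ≤ u p.2} = Set.univ := by
          ext u
          simp [hp]
        rw [this]
        exact MeasurableSet.univ
    · exact MeasurableSet.iInter fun i =>
        (measurableSet_le measurable_const (measurable_pi_apply _)).inter
          (measurableSet_le (measurable_pi_apply _) measurable_const)
  -- the pointwise identity on Q
  have hpoint : ∀ u ∈ QSet K, ∑ σ : Equiv.Perm (Fin K), g hL (u ∘ σ)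
      = ((L.factorial : ℝ) * (K - L).factorial) *
          ∑ k : Fin K, D u k *
            ∑ S ∈ Finset.univ.powersetCard L, f (cfg S) u * rCoef K k S := by
    intro u hu
    have h1 : ∑ σ : Equiv.Perm (Fin K), g hL (u ∘ σ)
        = ∑ σ : Equiv.Perm (Fin K), g (cfg (mS σ)) u :=
      Finset.sum_congr rfl fun σ _ => congrFun (hgσ σ) u
    rw [h1, hgroup u, ← Finset.mul_sum]
    congr 1
    have h2 : ∀ S : Finset (Fin K), g (cfg S) u
        = ∑ k, (D u k * rCoef K k S) * f (cfg S) u := by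
      intro S
      have hanti : ∀ i j : Fin K, i ≤ j → D u j ≤ D u i :=
        fun i j hij => hDMono u i j (hu.1 hij)
      have hfd := fdp_eq K (D u) (hD01 u) hanti S
      simp only [hg]
      have hnum : (∑ k, if cfg S k then 0 else D u k)
          = ∑ k, if k ∈ S then 0 else D u k := by
        refine Finset.sum_congr rfl fun k _ => ?_
        simp [hcfg]
      rw [hnum, hfd, Finset.sum_mul]
    rw [Finset.sum_congr rfl (fun S _ => h2 S), Finset.sum_comm]
    refine Finset.sum_congr rfl fun k _ => ?_
    rw [Finset.mul_sum]
    refine Finset.sum_congr rfl fun S _ => ?_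
    ring
  -- final assembly
  have hFDR : FDRm K f hL D = ∫ u in unitCube K, g hL u := rfl
  have hinv : ∑ σ : Equiv.Perm (Fin K), ∫ v in QSet K, g hL (v ∘ σ.symm)
      = ∑ σ : Equiv.Perm (Fin K), ∫ v in QSet K, g hL (v ∘ σ) :=
    Fintype.sum_equiv (Equiv.inv (Equiv.Perm (Fin K))) _ _ (fun σ => rfl)
  have hswap : ∑ σ : Equiv.Perm (Fin K), ∫ v in QSet K, g hL (v ∘ σ)
      = ∫ v in QSet K, ∑ σ : Equiv.Perm (Fin K), g hL (v ∘ σ) := by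
    rw [integral_finset_sum Finset.univ (fun σ _ => ?_)]
    rw [hgσ σ]
    exact hgInt _ _ hQsub
  calc FDRm K f hL D
      = ∑ σ : Equiv.Perm (Fin K), ∫ u in unitCube K ∩ A σ, g hL u := by
        rw [hFDR, hsplit]
    _ = ∑ σ : Equiv.Perm (Fin K), ∫ v in QSet K, g hL (v ∘ σ.symm) :=
        Finset.sum_congr rfl fun σ _ => hchange σ
    _ = ∫ v in QSet K, ∑ σ : Equiv.Perm (Fin K), g hL (v ∘ σ) := by rw [hinv, hswap]
    _ = ∫ v in QSet K, ((L.factorial : ℝ) * (K - L).factorial) *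
          ∑ k : Fin K, D v k *
            ∑ S ∈ Finset.univ.powersetCard L, f (cfg S) v * rCoef K k S :=
        setIntegral_congr_fun hQmeas hpoint
    _ = ((L.factorial : ℝ) * (K - L).factorial) *
          ∫ v in QSet K, ∑ k : Fin K, D v k *
            ∑ S ∈ Finset.univ.powersetCard L, f (cfg S) v * rCoef K k S := by
        rw [MeasureTheory.integral_const_mul]
    _ = ((L.factorial : ℝ) * (K - L).factorial) *
          ∫ u in QSet K, ∑ k : Fin K, D u k *
            ∑ S ∈ Finset.univ.powersetCard L,
              f (fun k' => decide (k' ∈ S)) u * rCoef K k S := by simp only [hcfg]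

end
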